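/- The definite integral ∫_{-1/2}^{1/2} arcsin((1+2x)/√5) dx equals arctan(2) + 1/2 - √5/2. -/

import Mathlib

open Real

lemma sqrt5_pos : (0:ℝ) < Real.sqrt 5 := Real.sqrt_pos.mpr (by norm_num)

lemma aux_deriv (x : ℝ) (hx : x ∈ Set.uIcc (-(1:ℝ)/2) (1/2)) :
    HasDerivAt (fun y : ℝ =>
      (1 + 2*y)/2 * Real.arcsin ((1 + 2*y) / Real.sqrt 5)
        + Real.sqrt 5 / 2 * Real.sqrt (1 - ((1 + 2*y) / Real.sqrt 5)^2))
      (Real.arcsin ((1 + 2*x) / Real.sqrt 5)) x := by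
  have h5 : (0:ℝ) < Real.sqrt 5 := sqrt5_pos
  have hsq : Real.sqrt 5 ^ 2 = 5 := Real.sq_sqrt (by norm_num)
  rw [Set.uIcc_of_le (by norm_num)] at hx
  obtain ⟨hx1, hx2⟩ := hx
  set g : ℝ := (1 + 2*x) / Real.sqrt 5 with hg
  have hg0 : 0 ≤ g := div_nonneg (by linarith) h5.le
  have hglt : g < 1 := by
    rw [hg, div_lt_one h5]
    nlinarith [Real.sq_sqrt (show (0:ℝ) ≤ 5 by norm_num), h5]
  have hg2 : g^2 < 1 := by nlinarith
  have hpos : 0 < 1 - g^2 := by linarith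
  have hu : HasDerivAt (fun y : ℝ => (1 + 2*y) / Real.sqrt 5) (2 / Real.sqrt 5) x := by
    have : HasDerivAt (fun y : ℝ => 1 + 2*y) 2 x := by
      simpa using ((hasDerivAt_id x).const_mul 2).const_add 1
    exact this.div_const _
  have harc : HasDerivAt (fun y : ℝ => Real.arcsin ((1 + 2*y) / Real.sqrt 5))
      (1 / Real.sqrt (1 - g^2) * (2 / Real.sqrt 5)) x := by
    have := (Real.hasDerivAt_arcsin (by linarith : g ≠ -1) (ne_of_lt hglt)).comp x hu
    exact this
  have hhalf : HasDerivAt (fun y : ℝ => (1 + 2*y)/2) 1 x := by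
    have : HasDerivAt (fun y : ℝ => 1 + 2*y) 2 x := by
      simpa using ((hasDerivAt_id x).const_mul 2).const_add 1
    simpa using this.div_const 2
  have hinner : HasDerivAt (fun y : ℝ => 1 - ((1 + 2*y) / Real.sqrt 5)^2)
      (-(2*g*(2/Real.sqrt 5))) x := by
    have := (hu.pow 2).const_sub 1
    refine this.congr_deriv ?_
    ring
  have hsqrt : HasDerivAt (fun y : ℝ => Real.sqrt (1 - ((1 + 2*y) / Real.sqrt 5)^2))
      (-(2*g*(2/Real.sqrt 5)) / (2 * Real.sqrt (1 - g^2))) x :=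
    hinner.sqrt (ne_of_gt hpos)
  have h := (hhalf.mul harc).add ((hsqrt.const_mul (Real.sqrt 5 / 2)))
  refine h.congr_deriv ?_
  have hs : Real.sqrt (1 - g^2) ≠ 0 := ne_of_gt (Real.sqrt_pos.mpr hpos)
  have hs5 : Real.sqrt 5 ≠ 0 := ne_of_gt h5
  have hgs : g * Real.sqrt 5 = 1 + 2*x := by
    rw [hg]; field_simp
  rw [← hgs]
  field_simp
  ring

theorem integral_I2 :
    ∫ x in (-(1:ℝ)/2)..(1/2), Real.arcsin ((1 + 2*x) / Real.sqrt 5)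
      = Real.arctan 2 + 1/2 - Real.sqrt 5 / 2 := by
  have h5 : (0:ℝ) < Real.sqrt 5 := sqrt5_pos
  have hsq : Real.sqrt 5 ^ 2 = 5 := Real.sq_sqrt (by norm_num)
  have hcont : Continuous fun x : ℝ => Real.arcsin ((1 + 2*x) / Real.sqrt 5) :=
    Real.continuous_arcsin.comp (by continuity)
  have := intervalIntegral.integral_eq_sub_of_hasDerivAt aux_deriv
    (hcont.intervalIntegrable _ _)
  rw [this]
  have h1 : (1 + 2*(1/2 : ℝ)) / Real.sqrt 5 = 2 / Real.sqrt 5 := by norm_num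
  have h0 : (1 + 2*(-(1:ℝ)/2)) / Real.sqrt 5 = 0 := by norm_num
  rw [h1, h0]
  have e1 : (1 - (2 / Real.sqrt 5)^2 : ℝ) = 1/5 := by
    rw [div_pow, hsq]; norm_num
  have e2 : Real.sqrt (1/5 : ℝ) = 1 / Real.sqrt 5 := by
    rw [one_div, one_div, Real.sqrt_inv]
  have e3 : Real.arcsin (2 / Real.sqrt 5) = Real.arctan 2 := by
    rw [Real.arctan_eq_arcsin]
    norm_num
  have hs5 : Real.sqrt 5 ≠ 0 := ne_of_gt h5
  rw [e1, e2, e3]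
  simp only [Real.arcsin_zero, Real.sqrt_one]
  field_simp
  ring
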